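/- Let L : L²([0,1]) → L²([0,1]) be a compact bounded linear operator that is integral-preserving. Then L has a nontrivial fixed point: there exists g ∈ L²([0,1]) with g ≠ 0 and L g = g. -/

import Mathlib

open MeasureTheory

/-- Lebesgue measure restricted to the unit interval `[0,1]`. -/
noncomputable def μ01 : Measure ℝ := volume.restrict (Set.Icc (0 : ℝ) 1)

section Aux

open MeasureTheory

variable {H : Type*} [NormedAddCommGroup H] [InnerProductSpace ℝ H] [CompleteSpace H]

-- Step B: compact extraction
lemma extract_conv (L : H →L[ℝ] H) (hcomp : IsCompactOperator L)
    (u : ℕ → H) (hu : ∀ n, ‖u n‖ ≤ 1) :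
    ∃ (y : H) (φ : ℕ → ℕ), StrictMono φ ∧
      Filter.Tendsto (fun n => L (u (φ n))) Filter.atTop (nhds y) := by
  have hcomp' : IsCompactOperator (L.toLinearMap : H →ₗ[ℝ] H) := hcomp
  have hK := hcomp'.isCompact_closure_image_closedBall (𝕜₁ := ℝ) 1
  have hmem : ∀ n, L (u n) ∈ closure (L '' Metric.closedBall 0 1) := fun n =>
    subset_closure ⟨u n, by simpa [Metric.mem_closedBall, dist_zero_right] using hu n, rfl⟩
  obtain ⟨y, -, φ, hφ, hconv⟩ := IsCompact.tendsto_subseq (x := fun n => L (u n)) hK hmem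
  exact ⟨y, φ, hφ, hconv⟩

-- Step B: bound below
lemma bound_below (L : H →L[ℝ] H) (hcomp : IsCompactOperator L)
    (hinj : ∀ g : H, L g = g → g = 0) :
    ∃ c : ℝ, 0 < c ∧ ∀ x : H, c * ‖x‖ ≤ ‖x - L x‖ := by
  by_contra hc
  push_neg at hc
  -- build sequence of unit vectors with ‖x - L x‖ small
  have hseq : ∀ n : ℕ, ∃ u : H, ‖u‖ = 1 ∧ ‖u - L u‖ < 1 / (n + 1) := by
    intro n
    obtain ⟨x, hx⟩ := hc (1 / (n + 1) / 2) (by positivity)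
    have hx0 : x ≠ 0 := by
      rintro rfl
      simp at hx
    refine ⟨‖x‖⁻¹ • x, ?_, ?_⟩
    · simp [norm_smul, inv_mul_cancel₀ (norm_ne_zero_iff.mpr hx0)]
    · have h1 : (‖x‖⁻¹ • x) - L (‖x‖⁻¹ • x) = ‖x‖⁻¹ • (x - L x) := by
        rw [L.map_smul, smul_sub]
      rw [h1, norm_smul, norm_inv, norm_norm]
      have hxn : 0 < ‖x‖ := norm_pos_iff.mpr hx0
      rw [inv_mul_lt_iff₀ hxn]
      calc ‖x - L x‖ < 1 / (n + 1) / 2 * ‖x‖ := hx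
        _ ≤ ‖x‖ * (1 / (n + 1)) := by
            have h0 : (0:ℝ) < 1 / ((n:ℝ)+1) := by positivity
            nlinarith [norm_nonneg x]
  choose u hu1 hu2 using hseq
  obtain ⟨y, φ, hφ, hconv⟩ := extract_conv L hcomp u (fun n => le_of_eq (hu1 n))
  have hTu : Filter.Tendsto (fun n => u (φ n) - L (u (φ n))) Filter.atTop (nhds 0) := by
    rw [tendsto_iff_norm_sub_tendsto_zero]
    simp only [sub_zero]
    apply squeeze_zero (fun n => norm_nonneg _) (fun n => (hu2 (φ n)).le)
    have : Filter.Tendsto (fun n : ℕ => 1 / ((n:ℝ) + 1)) Filter.atTop (nhds 0) :=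
      tendsto_one_div_add_atTop_nhds_zero_nat
    exact this.comp (hφ.tendsto_atTop.comp Filter.tendsto_id) |>.congr (fun n => rfl)
  have huy : Filter.Tendsto (fun n => u (φ n)) Filter.atTop (nhds y) := by
    have := hTu.add hconv
    simpa using this
  have hy1 : ‖y‖ = 1 := by
    have := (continuous_norm.tendsto y).comp huy
    have h2 : Filter.Tendsto (fun n => ‖u (φ n)‖) Filter.atTop (nhds 1) := by
      simpa [hu1] using tendsto_const_nhds (x := (1:ℝ)) (f := Filter.atTop (α := ℕ))
    exact tendsto_nhds_unique this h2
  have hLy : L y = y := by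
    have h3 : Filter.Tendsto (fun n => u (φ n) - L (u (φ n))) Filter.atTop (nhds (y - L y)) :=
      huy.sub ((L.continuous.tendsto y).comp huy)
    have := tendsto_nhds_unique h3 hTu
    exact (sub_eq_zero.mp this).symm
  exact absurd (hinj y hLy ▸ hy1) (by norm_num)

open ContinuousLinearMap in
lemma hilbert_fixed_point (L : H →L[ℝ] H) (hcomp : IsCompactOperator L)
    (c : H) (hc0 : c ≠ 0) (hc : ∀ g : H, inner ℝ (g - L g) c = (0:ℝ)) :
    ∃ g : H, g ≠ 0 ∧ L g = g := by
  by_contra hfix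
  push_neg at hfix
  have hinj : ∀ g : H, L g = g → g = 0 := by
    intro g hg
    by_contra hne
    exact (hfix g hne) hg
  obtain ⟨c0, hc0pos, hbd⟩ := bound_below L hcomp hinj
  set T : H →L[ℝ] H := ContinuousLinearMap.id ℝ H - L with hT
  have hTapp : ∀ x : H, T x = x - L x := fun x => rfl
  -- bound for T^n
  have hbdn : ∀ (n : ℕ) (x : H), c0 ^ n * ‖x‖ ≤ ‖(T ^ n) x‖ := by
    intro n
    induction n with
    | zero => intro x; simp
    | succ n ih =>
      intro x
      have h1 : (T ^ (n+1)) x = (T ^ n) (T x) := by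
        rw [pow_succ, ContinuousLinearMap.mul_apply]
      rw [h1]
      calc c0 ^ (n+1) * ‖x‖ = c0 ^ n * (c0 * ‖x‖) := by ring
        _ ≤ c0 ^ n * ‖T x‖ := by
            apply mul_le_mul_of_nonneg_left _ (le_of_lt (pow_pos hc0pos n))
            simpa [hTapp] using hbd x
        _ ≤ ‖(T ^ n) (T x)‖ := ih (T x)
  have hTninj : ∀ (n : ℕ) (x : H), (T ^ n) x = 0 → x = 0 := by
    intro n x hx
    have h1 := hbdn n x
    rw [hx, norm_zero] at h1
    have h2 : ‖x‖ = 0 := by nlinarith [pow_pos hc0pos n, norm_nonneg x]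
    exact norm_eq_zero.mp h2
  set V : ℕ → Submodule ℝ H := fun n => LinearMap.range ((T ^ n : H →L[ℝ] H) : H →ₗ[ℝ] H) with hV
  have hVclosed : ∀ n, IsClosed (V n : Set H) := by
    intro n
    have hanti : AntilipschitzWith ((c0 ^ n)⁻¹).toNNReal (T ^ n) := by
      apply ContinuousLinearMap.antilipschitz_of_bound
      intro x
      rw [Real.coe_toNNReal _ (by positivity), le_inv_mul_iff₀ (pow_pos hc0pos n)]
      exact hbdn n x
    have h := hanti.isClosed_range (T ^ n).uniformContinuous
    have he : (V n : Set H) = Set.range (T ^ n) := LinearMap.coe_range _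
    rw [he]
    exact h
  have hVsucc : ∀ n, V (n+1) ≤ V n := by
    rintro n x ⟨a, rfl⟩
    exact ⟨T a, by simp only [ContinuousLinearMap.coe_coe]; rw [← ContinuousLinearMap.mul_apply, ← pow_succ]⟩
  have hVmono : ∀ m n, n ≤ m → V m ≤ V n := by
    intro m n h
    induction m with
    | zero => simpa [Nat.le_zero.mp h] using le_refl _
    | succ m ih =>
      rcases Nat.lt_or_ge n (m+1) with h'|h'
      · exact le_trans (hVsucc m) (ih (Nat.lt_succ_iff.mp h'))
      · have : n = m + 1 := le_antisymm h h'
        subst this; exact le_refl _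
  have hVstrict : ∀ n, V (n+1) < V n := by
    intro n
    refine lt_of_le_of_ne (hVsucc n) ?_
    intro heq
    -- T is surjective
    have hsurj : ∀ x : H, ∃ y, T y = x := by
      intro x
      have hx : (T ^ n) x ∈ V (n+1) := by rw [heq]; exact ⟨x, rfl⟩
      obtain ⟨y, hy⟩ := hx
      have : (T ^ (n+1)) y = (T ^ n) (T y) := by rw [pow_succ, ContinuousLinearMap.mul_apply]
      simp only [ContinuousLinearMap.coe_coe] at hy
      rw [this] at hy
      have hTyx : T y - x = 0 := by
        apply hTninj n
        rw [map_sub, hy, sub_self]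
      exact ⟨y, sub_eq_zero.mp hTyx⟩
    obtain ⟨g, hg⟩ := hsurj c
    have hcc : inner ℝ c c = (0:ℝ) := by
      nth_rewrite 1 [← hg]
      have := hc g
      rw [← hTapp] at this
      exact this
    exact hc0 (inner_self_eq_zero.mp hcc)
  -- pick orthonormal-ish sequence
  have hpick : ∀ n, ∃ x : H, ‖x‖ = 1 ∧ x ∈ V n ∧ ∀ w ∈ V (n+1), inner ℝ x w = (0:ℝ) := by
    intro n
    haveI : CompleteSpace (V (n+1)) := (hVclosed (n+1)).completeSpace_coe
    obtain ⟨y, hyn, hyn1⟩ := SetLike.exists_of_lt (hVstrict n)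
    set z := y - (Submodule.orthogonalProjection (V (n+1)) y : H) with hz
    have hzV : z ∈ V n := by
      apply Submodule.sub_mem _ hyn
      exact hVsucc n (Submodule.orthogonalProjection (V (n+1)) y).2
    have hzo : z ∈ (V (n+1))ᗮ := Submodule.sub_starProjection_mem_orthogonal (K := V (n+1)) y
    have hz0 : z ≠ 0 := by
      intro h
      apply hyn1
      have : y = (Submodule.orthogonalProjection (V (n+1)) y : H) := by
        exact sub_eq_zero.mp h
      rw [this]; exact (Submodule.orthogonalProjection (V (n+1)) y).2
    refine ⟨‖z‖⁻¹ • z, ?_, Submodule.smul_mem _ _ hzV, ?_⟩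
    · simp [norm_smul, inv_mul_cancel₀ (norm_ne_zero_iff.mpr hz0)]
    · intro w hw
      have := (Submodule.smul_mem _ (‖z‖⁻¹) hzo) w hw
      rw [real_inner_comm]
      exact this
  choose x hx1 hxV hxO using hpick
  -- separation
  have hsep : ∀ m n, n < m → 1 ≤ ‖L (x n) - L (x m)‖ := by
    intro m n hnm
    have hw : (T (x n) + x m - T (x m)) ∈ V (n+1) := by
      apply Submodule.sub_mem
      apply Submodule.add_mem
      · obtain ⟨a, ha⟩ := hxV n
        exact ⟨a, by rw [← ha]; simp only [ContinuousLinearMap.coe_coe]; rw [← ContinuousLinearMap.mul_apply, ← pow_succ']⟩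
      · exact hVmono m (n+1) hnm (hxV m)
      · obtain ⟨a, ha⟩ := hxV m
        refine hVmono (m+1) (n+1) (by omega) ⟨a, ?_⟩
        rw [← ha]; simp only [ContinuousLinearMap.coe_coe]; rw [← ContinuousLinearMap.mul_apply, ← pow_succ']
    set w := T (x n) + x m - T (x m) with hwdef
    have heq : L (x n) - L (x m) = x n - w := by
      simp only [hwdef, hTapp]; abel
    have horth : inner ℝ (x n) w = (0:ℝ) := hxO n w hw
    have : ‖x n - w‖ ^ 2 = ‖x n‖ ^ 2 + ‖w‖ ^ 2 := by
      rw [← real_inner_self_eq_norm_sq, ← real_inner_self_eq_norm_sq, ← real_inner_self_eq_norm_sq]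
      rw [inner_sub_sub_self, horth, real_inner_comm (x n) w, horth]
      ring
    rw [heq]
    nlinarith [norm_nonneg (x n - w), norm_nonneg w, hx1 n]
  -- compactness contradiction
  obtain ⟨y, φ, hφ, hconv⟩ := extract_conv L hcomp x (fun n => le_of_eq (hx1 n))
  have hcauchy := hconv.cauchySeq
  rw [Metric.cauchySeq_iff] at hcauchy
  obtain ⟨N, hN⟩ := hcauchy 1 one_pos
  have h1 := hN N (by omega) (N+1) (by omega)
  rw [dist_eq_norm] at h1
  exact absurd h1 (not_lt.mpr (hsep (φ (N+1)) (φ N) (hφ (by omega))))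


end Aux

lemma μ01_univ : μ01 Set.univ = 1 := by
  rw [μ01, Measure.restrict_apply_univ, Real.volume_Icc]
  norm_num

instance : IsFiniteMeasure μ01 := by
  constructor; rw [μ01_univ]; exact ENNReal.one_lt_top

theorem compact_integral_preserving_has_fixed_point
    (L : Lp ℝ 2 μ01 →L[ℝ] Lp ℝ 2 μ01)
    (hcomp : IsCompactOperator L)
    (hint : ∀ g : Lp ℝ 2 μ01, ∫ x, (L g) x ∂μ01 = ∫ x, g x ∂μ01) :
    ∃ g : Lp ℝ 2 μ01, g ≠ 0 ∧ L g = g := by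
  set c : Lp ℝ 2 μ01 :=
    indicatorConstLp 2 MeasurableSet.univ (by rw [μ01_univ]; exact ENNReal.one_ne_top) (1:ℝ) with hcdef
  have hinner : ∀ g : Lp ℝ 2 μ01, inner ℝ g c = ∫ x, g x ∂μ01 := by
    intro g
    rw [MeasureTheory.L2.inner_def]
    apply integral_congr_ae
    filter_upwards [indicatorConstLp_coeFn (μ := μ01) (p := 2)
      (hs := MeasurableSet.univ) (hμs := by rw [μ01_univ]; exact ENNReal.one_ne_top) (c := (1:ℝ))]
      with a ha
    rw [hcdef] at *
    rw [ha]
    simp [RCLike.inner_apply]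
  have hc0 : c ≠ 0 := by
    intro h
    have h1 : inner ℝ c c = (0:ℝ) := by rw [h]; simp
    rw [hinner c] at h1
    have h2 : ∫ x, c x ∂μ01 = 1 := by
      have := indicatorConstLp_coeFn (μ := μ01) (p := 2)
        (hs := MeasurableSet.univ) (hμs := by rw [μ01_univ]; exact ENNReal.one_ne_top) (c := (1:ℝ))
      rw [integral_congr_ae (hcdef ▸ this)]
      simp [measureReal_def, μ01_univ]
    rw [h2] at h1
    norm_num at h1
  have hc : ∀ g : Lp ℝ 2 μ01, inner ℝ (g - L g) c = (0:ℝ) := by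
    intro g
    rw [inner_sub_left, hinner, hinner, hint g, sub_self]
  exact hilbert_fixed_point L hcomp c hc0 hc
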